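/- Let ρ_θ^j = e^{-iθ(n·σ)/2} ρ_0^j e^{iθ(n·σ)/2} (j=1,2) be two single-qubit shift-parameter models with Bloch vectors s₁, s₂ (both of norm < 1), and let g^j be their SLD Fisher informations and g^λ the SLD Fisher information of λρ_θ¹ + (1−λ)ρ_θ² for λ ∈ (0,1). Then λg¹ + (1−λ)g² − g^λ = λ(1−λ)|n × (s₁ − s₂)|². In particular, equality in the convexity inequality holds if and only if s₁ − s₂ is parallel to n. -/

import Mathlib

open Matrix Kronecker
noncomputable section

/-- Pauli X matrix. -/
def σx : Matrix (Fin 2) (Fin 2) ℂ := !![0, 1; 1, 0]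
/-- Pauli Y matrix. -/
def σy : Matrix (Fin 2) (Fin 2) ℂ := !![0, -Complex.I; Complex.I, 0]
/-- Pauli Z matrix. -/
def σz : Matrix (Fin 2) (Fin 2) ℂ := !![1, 0; 0, -1]

/-- `v · σ` for a real 3-vector `v`. -/
def dotσ (v : Fin 3 → ℝ) : Matrix (Fin 2) (Fin 2) ℂ :=
  (v 0 : ℂ) • σx + (v 1 : ℂ) • σy + (v 2 : ℂ) • σz

/-- Qubit state with Bloch vector `s`: `(I + s·σ)/2`. -/
def bloch (s : Fin 3 → ℝ) : Matrix (Fin 2) (Fin 2) ℂ := (1 / 2 : ℂ) • (1 + dotσ s)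


section AuxExp
open NormedSpace

attribute [local instance] Matrix.linftyOpNormedAddCommGroup Matrix.linftyOpNormedRing
  Matrix.linftyOpNormedAlgebra Matrix.linftyOpIsBoundedSMul

lemma exp_mul_exp_neg' (m : Matrix (Fin 2) (Fin 2) ℂ) (z : ℂ) :
    exp (z • m) * exp ((-z) • m) = 1 := by
  rw [← Matrix.exp_add_of_commute _ _ (((Commute.refl m).smul_left z).smul_right (-z))]
  simp

lemma m_comm_exp' (m : Matrix (Fin 2) (Fin 2) ℂ) (z : ℂ) :
    m * exp (z • m) = exp (z • m) * m :=
  (((Commute.refl m).smul_right z).exp_right).eq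

lemma hasDerivAt_conj_exp (m B : Matrix (Fin 2) (Fin 2) ℂ) (θ : ℝ) (i j : Fin 2) :
    HasDerivAt (fun t : ℝ => (exp ((t : ℂ) • m) * B * exp ((-(t : ℂ)) • m)) i j)
      ((m * (exp ((θ : ℂ) • m) * B * exp ((-(θ : ℂ)) • m))
        - (exp ((θ : ℂ) • m) * B * exp ((-(θ : ℂ)) • m)) * m) i j) θ := by
  have h1 : HasDerivAt (fun z : ℂ => exp (z • m)) (exp ((θ : ℂ) • m) * m) (θ : ℂ) :=
    hasDerivAt_exp_smul_const m (θ : ℂ)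
  have hneg : HasDerivAt (fun z : ℂ => -z) (-1 : ℂ) (θ : ℂ) := (hasDerivAt_id _).neg
  have h2 : HasDerivAt (fun z : ℂ => exp ((-z) • m))
      ((-1 : ℂ) • (exp ((-(θ:ℂ)) • m) * m)) (θ : ℂ) :=
    (hasDerivAt_exp_smul_const m (-(θ:ℂ))).scomp (θ:ℂ) hneg
  have h3 : HasDerivAt (fun z : ℂ => exp (z • m) * B * exp ((-z) • m))
      ((exp ((θ:ℂ) • m) * m * B) * exp ((-(θ:ℂ)) • m)
        + (exp ((θ:ℂ) • m) * B) * ((-1 : ℂ) • (exp ((-(θ:ℂ)) • m) * m))) (θ:ℂ) :=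
    ((h1.mul_const B).mul h2)
  let φ : Matrix (Fin 2) (Fin 2) ℂ →L[ℂ] ℂ :=
    LinearMap.toContinuousLinearMap (Matrix.entryLinearMap ℂ ℂ i j)
  have h5 := (φ.hasFDerivAt.comp_hasDerivAt (θ:ℂ) h3).comp_ofReal
  convert h5 using 2
  · rfl
  have hcm := m_comm_exp' m (θ:ℂ)
  rw [neg_one_smul, mul_neg, ← sub_eq_add_neg, ← hcm]
  show _ = (m * exp ((θ:ℂ) • m) * B * exp ((-(θ:ℂ)) • m)
      - exp ((θ:ℂ) • m) * B * (exp ((-(θ:ℂ)) • m) * m)) i j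
  congr 1
  simp only [mul_assoc]

end AuxExp

lemma key_sld (ρ L : Matrix (Fin 2) (Fin 2) ℂ) {ρ' : Matrix (Fin 2) (Fin 2) ℂ}
    (h1 : ρ.trace = 1) (hS : ρ' = (1 / 2 : ℂ) • (ρ * L + L * ρ))
    (h2 : ρ'.trace = 0) (h3 : (ρ * ρ').trace = 0) :
    (L * ρ').trace = 2 * (ρ' * ρ').trace := by
  subst hS
  simp only [Matrix.trace, Matrix.diag, Fin.sum_univ_two, Matrix.mul_apply, Matrix.smul_apply,
    Matrix.add_apply, smul_eq_mul] at h1 h2 h3 ⊢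
  set a := ρ 0 0; set b := ρ 0 1; set c := ρ 1 0; set d := ρ 1 1
  set p := L 0 0; set q := L 0 1; set r := L 1 0; set s := L 1 1
  linear_combination
      (-2*((a+d)/2)*((p+s)/2)^2 - 2*((p+s)/2)*((a*p+b*r+c*q+d*s) - 2*((a+d)/2)*((p+s)/2))
        - ((a+d)/2)*(p^2+2*q*r+s^2 - 2*((p+s)/2)^2)) * h1
    + (4*((a+d)/2)*((p+s)/2) - (a*p+b*r+c*q+d*s)) * h2
    + (-2*((p+s)/2)) * h3

lemma trace_bloch (s : Fin 3 → ℝ) : (bloch s).trace = 1 := by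
  simp [bloch, dotσ, σx, σy, σz, Matrix.trace, Matrix.diag, Fin.sum_univ_two]
  ring

lemma trace_dotσ_sq (w : Fin 3 → ℝ) :
    (dotσ w * dotσ w).trace = 2 * ((∑ i, w i ^ 2 : ℝ) : ℂ) := by
  simp only [dotσ, σx, σy, σz, Matrix.trace, Matrix.diag, Fin.sum_univ_two, Fin.sum_univ_three,
    Matrix.mul_apply, Matrix.add_apply, Matrix.smul_apply, smul_eq_mul, Matrix.cons_val',
    Matrix.cons_val_zero, Matrix.cons_val_one, Matrix.head_cons, Matrix.empty_val',
    Matrix.cons_val_fin_one, Matrix.head_fin_const]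
  push_cast
  apply Complex.ext <;> simp [← Complex.ofReal_pow] <;> ring

lemma comm_eq (n s₁ s₂ : Fin 3 → ℝ) :
    (-Complex.I / 2) • dotσ n * (bloch s₁ - bloch s₂)
      - (bloch s₁ - bloch s₂) * ((-Complex.I / 2) • dotσ n)
    = (1/2 : ℂ) • dotσ (crossProduct n (s₁ - s₂)) := by
  ext i j
  fin_cases i <;> fin_cases j <;>
    simp only [crossProduct, LinearMap.mk₂_apply, dotσ, bloch, σx, σy, σz, Matrix.mul_apply,
      Fin.sum_univ_two, Matrix.sub_apply, Matrix.add_apply, Matrix.smul_apply, Matrix.one_apply,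
      smul_eq_mul, Pi.sub_apply, Matrix.cons_val', Matrix.cons_val_zero, Matrix.cons_val_one,
      Matrix.head_cons, Matrix.empty_val', Matrix.cons_val_fin_one, Matrix.head_fin_const,
      Matrix.cons_val_two, Matrix.tail_cons] <;>
    push_cast <;>
    (apply Complex.ext <;> simp [← Complex.ofReal_pow] <;> ring)

lemma conj_comm_trace (U V m D : Matrix (Fin 2) (Fin 2) ℂ)
    (hVU : V * U = 1) (hmU : m * U = U * m) (hmV : m * V = V * m) :
    ((m * (U * D * V) - (U * D * V) * m) * (m * (U * D * V) - (U * D * V) * m)).trace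
      = ((m * D - D * m) * (m * D - D * m)).trace := by
  have h1 : m * (U * D * V) = U * (m * D) * V := by
    simp only [← mul_assoc]; rw [hmU]
  have h2 : (U * D * V) * m = U * (D * m) * V := by
    simp only [mul_assoc]; rw [← hmV]
  have h : m * (U * D * V) - (U * D * V) * m = U * ((m * D - D * m)) * V := by
    rw [h1, h2, mul_sub, sub_mul]
  rw [h]
  have h3 : (U * (m * D - D * m) * V) * (U * (m * D - D * m) * V)
      = U * ((m * D - D * m) * (m * D - D * m)) * V := by
    have h4 : V * (U * ((m * D - D * m) * V)) = (m * D - D * m) * V := by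
      rw [← mul_assoc, hVU, one_mul]
    simp only [mul_assoc, h4]
  rw [h3, Matrix.trace_mul_cycle, ← mul_assoc, hVU, one_mul]

lemma cross_zero_iff (n d : Fin 3 → ℝ) (hn : ∑ i, n i ^ 2 = 1) :
    (∑ i, (crossProduct n d) i ^ 2 = 0) ↔ ∃ c : ℝ, d = c • n := by
  rw [Fin.sum_univ_three] at hn
  rw [cross_apply, Fin.sum_univ_three]
  simp only [Matrix.cons_val_zero, Matrix.cons_val_one, Matrix.head_cons, Matrix.cons_val_two,
    Matrix.tail_cons]
  constructor
  · intro h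
    have q0 := sq_nonneg (n 1 * d 2 - n 2 * d 1)
    have q1 := sq_nonneg (n 2 * d 0 - n 0 * d 2)
    have q2 := sq_nonneg (n 0 * d 1 - n 1 * d 0)
    have c0 : n 1 * d 2 - n 2 * d 1 = 0 := by
      have e0 : (n 1 * d 2 - n 2 * d 1) ^ 2 = 0 := by linarith
      exact pow_eq_zero_iff two_ne_zero |>.mp e0
    have c1 : n 2 * d 0 - n 0 * d 2 = 0 := by
      have e1 : (n 2 * d 0 - n 0 * d 2) ^ 2 = 0 := by linarith
      exact pow_eq_zero_iff two_ne_zero |>.mp e1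
    have c2 : n 0 * d 1 - n 1 * d 0 = 0 := by
      have e2 : (n 0 * d 1 - n 1 * d 0) ^ 2 = 0 := by linarith
      exact pow_eq_zero_iff two_ne_zero |>.mp e2
    refine ⟨d 0 * n 0 + d 1 * n 1 + d 2 * n 2, ?_⟩
    funext i
    fin_cases i <;> simp only [Pi.smul_apply, smul_eq_mul]
    · show d 0 = (d 0 * n 0 + d 1 * n 1 + d 2 * n 2) * n 0
      linear_combination (-(d 0)) * hn - (n 1) * c2 + (n 2) * c1
    · show d 1 = (d 0 * n 0 + d 1 * n 1 + d 2 * n 2) * n 1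
      linear_combination (-(d 1)) * hn + (n 0) * c2 - (n 2) * c0
    · show d 2 = (d 0 * n 0 + d 1 * n 1 + d 2 * n 2) * n 2
      linear_combination (-(d 2)) * hn - (n 0) * c1 + (n 1) * c0
  · rintro ⟨c, rfl⟩
    simp only [Pi.smul_apply, smul_eq_mul]
    ring

/-- For two single-qubit shift-parameter models `ρ_θ^j = e^{-iθ(n·σ)/2} ρ₀^j e^{iθ(n·σ)/2}` with
Bloch vectors `s₁, s₂`, the convexity defect of the SLD Fisher information of the mixture
`λρ_θ¹ + (1-λ)ρ_θ²` is `λ(1-λ)|n × (s₁ - s₂)|²`; in particular equality in the convexity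
inequality holds iff `s₁ - s₂` is parallel to `n`. -/
theorem sld_fisher_convexity_defect_qubit
    (n s₁ s₂ : Fin 3 → ℝ) (hn : ∑ i, n i ^ 2 = 1)
    (hs₁ : ∑ i, s₁ i ^ 2 < 1) (hs₂ : ∑ i, s₂ i ^ 2 < 1)
    (lam : ℝ) (hlam : lam ∈ Set.Ioo (0 : ℝ) 1)
    (ρ₁ ρ₂ ρmix : ℝ → Matrix (Fin 2) (Fin 2) ℂ)
    (hρ₁ : ∀ t : ℝ, ρ₁ t =
      NormedSpace.exp ((-(Complex.I * (t : ℂ)) / 2) • dotσ n) * bloch s₁ *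
      NormedSpace.exp (((Complex.I * (t : ℂ)) / 2) • dotσ n))
    (hρ₂ : ∀ t : ℝ, ρ₂ t =
      NormedSpace.exp ((-(Complex.I * (t : ℂ)) / 2) • dotσ n) * bloch s₂ *
      NormedSpace.exp (((Complex.I * (t : ℂ)) / 2) • dotσ n))
    (hmix : ∀ t : ℝ, ρmix t = (lam : ℂ) • ρ₁ t + ((1 - lam : ℝ) : ℂ) • ρ₂ t)
    (θ : ℝ) (ρ₁' ρ₂' ρmix' : Matrix (Fin 2) (Fin 2) ℂ)
    (hρ₁' : ∀ i j, HasDerivAt (fun t => ρ₁ t i j) (ρ₁' i j) θ)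
    (hρ₂' : ∀ i j, HasDerivAt (fun t => ρ₂ t i j) (ρ₂' i j) θ)
    (hρmix' : ∀ i j, HasDerivAt (fun t => ρmix t i j) (ρmix' i j) θ)
    (L₁ L₂ Lmix : Matrix (Fin 2) (Fin 2) ℂ)
    (hL₁ : L₁.IsHermitian) (hL₂ : L₂.IsHermitian) (hLmix : Lmix.IsHermitian)
    (hSLD₁ : ρ₁' = (1 / 2 : ℂ) • (ρ₁ θ * L₁ + L₁ * ρ₁ θ))
    (hSLD₂ : ρ₂' = (1 / 2 : ℂ) • (ρ₂ θ * L₂ + L₂ * ρ₂ θ))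
    (hSLDmix : ρmix' = (1 / 2 : ℂ) • (ρmix θ * Lmix + Lmix * ρmix θ)) :
    lam * ((L₁ * ρ₁').trace).re + (1 - lam) * ((L₂ * ρ₂').trace).re
        - ((Lmix * ρmix').trace).re
      = lam * (1 - lam) * ∑ i, (crossProduct n (s₁ - s₂)) i ^ 2 ∧
    (lam * ((L₁ * ρ₁').trace).re + (1 - lam) * ((L₂ * ρ₂').trace).re
        = ((Lmix * ρmix').trace).re ↔ ∃ c : ℝ, s₁ - s₂ = c • n) := by
  obtain ⟨hl0, hl1⟩ := hlam
  set A := dotσ n with hA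
  set m : Matrix (Fin 2) (Fin 2) ℂ := (-Complex.I / 2) • A with hm
  have hsm : ∀ t : ℝ, (-(Complex.I * (t : ℂ)) / 2) • A = (t : ℂ) • m := by
    intro t; rw [hm, smul_smul]; congr 1; ring
  have hsm' : ∀ t : ℝ, ((Complex.I * (t : ℂ)) / 2) • A = (-(t : ℂ)) • m := by
    intro t; rw [hm, smul_smul]; congr 1; ring
  set U := NormedSpace.exp ((θ : ℂ) • m) with hU
  set V := NormedSpace.exp ((-(θ : ℂ)) • m) with hV
  have hUV : U * V = 1 := exp_mul_exp_neg' m (θ : ℂ)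
  have hVU : V * U = 1 := by
    have h := exp_mul_exp_neg' m (-(θ : ℂ)); rwa [neg_neg] at h
  have hmU : m * U = U * m := m_comm_exp' m _
  have hmV : m * V = V * m := m_comm_exp' m _
  have hR₁ : ρ₁ θ = U * bloch s₁ * V := by rw [hρ₁ θ, hsm θ, hsm' θ]
  have hR₂ : ρ₂ θ = U * bloch s₂ * V := by rw [hρ₂ θ, hsm θ, hsm' θ]
  have hd : ∀ (B : Matrix (Fin 2) (Fin 2) ℂ) (ρ : ℝ → Matrix (Fin 2) (Fin 2) ℂ)
      (ρ' : Matrix (Fin 2) (Fin 2) ℂ),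
      (∀ t : ℝ, ρ t = NormedSpace.exp ((-(Complex.I * (t : ℂ)) / 2) • A) * B *
        NormedSpace.exp (((Complex.I * (t : ℂ)) / 2) • A)) →
      (∀ i j, HasDerivAt (fun t => ρ t i j) (ρ' i j) θ) →
      ρ' = m * (U * B * V) - (U * B * V) * m := by
    intro B ρ ρ' hρ hρ'
    ext i j
    have hfe : (fun t : ℝ => ρ t i j)
        = fun t : ℝ => (NormedSpace.exp ((t : ℂ) • m) * B *
            NormedSpace.exp ((-(t : ℂ)) • m)) i j := by
      funext t; rw [hρ t, hsm t, hsm' t]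
    have h := hρ' i j
    rw [hfe] at h
    exact h.unique (hasDerivAt_conj_exp m B θ i j)
  have hd₁ : ρ₁' = m * (ρ₁ θ) - (ρ₁ θ) * m := by
    rw [hR₁]; exact hd (bloch s₁) ρ₁ ρ₁' hρ₁ hρ₁'
  have hd₂ : ρ₂' = m * (ρ₂ θ) - (ρ₂ θ) * m := by
    rw [hR₂]; exact hd (bloch s₂) ρ₂ ρ₂' hρ₂ hρ₂'
  have hdmixlin : ρmix' = (lam : ℂ) • ρ₁' + ((1 - lam : ℝ) : ℂ) • ρ₂' := by
    ext i j
    have h1 : HasDerivAt (fun t => (lam : ℂ) * ρ₁ t i j + ((1 - lam : ℝ) : ℂ) * ρ₂ t i j)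
        ((lam : ℂ) * ρ₁' i j + ((1 - lam : ℝ) : ℂ) * ρ₂' i j) θ :=
      ((hρ₁' i j).const_mul _).add ((hρ₂' i j).const_mul _)
    have hfe : (fun t : ℝ => ρmix t i j)
        = fun t => (lam : ℂ) * ρ₁ t i j + ((1 - lam : ℝ) : ℂ) * ρ₂ t i j := by
      funext t; rw [hmix t]; simp [Matrix.add_apply, Matrix.smul_apply, smul_eq_mul]
    have h := hρmix' i j
    rw [hfe] at h
    simpa using h.unique h1
  have hRmix : ρmix θ = (lam : ℂ) • ρ₁ θ + ((1 - lam : ℝ) : ℂ) • ρ₂ θ := hmix θ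
  have hdmix : ρmix' = m * (ρmix θ) - (ρmix θ) * m := by
    rw [hdmixlin, hd₁, hd₂, hRmix]
    ext i j
    simp only [Matrix.mul_apply, Matrix.sub_apply, Matrix.add_apply, Matrix.smul_apply,
      Fin.sum_univ_two, smul_eq_mul]
    ring
  have htr : ∀ (B : Matrix (Fin 2) (Fin 2) ℂ), (U * B * V).trace = B.trace := by
    intro B; rw [Matrix.trace_mul_cycle, hVU, one_mul]
  have htr₁ : (ρ₁ θ).trace = 1 := by rw [hR₁, htr, trace_bloch]
  have htr₂ : (ρ₂ θ).trace = 1 := by rw [hR₂, htr, trace_bloch]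
  have htrmix : (ρmix θ).trace = 1 := by
    rw [hRmix, Matrix.trace_add, Matrix.trace_smul, Matrix.trace_smul, htr₁, htr₂]
    simp only [smul_eq_mul]
    push_cast; ring
  have hcztr : ∀ (X : Matrix (Fin 2) (Fin 2) ℂ), (m * X - X * m).trace = 0 := by
    intro X
    simp only [Matrix.trace, Matrix.diag, Matrix.mul_apply, Matrix.sub_apply, Fin.sum_univ_two]
    ring
  have horth : ∀ (X : Matrix (Fin 2) (Fin 2) ℂ), (X * (m * X - X * m)).trace = 0 := by
    intro X
    simp only [Matrix.trace, Matrix.diag, Matrix.mul_apply, Matrix.sub_apply, Fin.sum_univ_two]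
    ring
  have hg₁ : (L₁ * ρ₁').trace = 2 * (ρ₁' * ρ₁').trace :=
    key_sld (ρ₁ θ) L₁ htr₁ hSLD₁ (by rw [hd₁]; exact hcztr _) (by rw [hd₁]; exact horth _)
  have hg₂ : (L₂ * ρ₂').trace = 2 * (ρ₂' * ρ₂').trace :=
    key_sld (ρ₂ θ) L₂ htr₂ hSLD₂ (by rw [hd₂]; exact hcztr _) (by rw [hd₂]; exact horth _)
  have hgmix : (Lmix * ρmix').trace = 2 * (ρmix' * ρmix').trace :=
    key_sld (ρmix θ) Lmix htrmix hSLDmix (by rw [hdmix]; exact hcztr _)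
      (by rw [hdmix]; exact horth _)
  set S : ℝ := ∑ i, (crossProduct n (s₁ - s₂)) i ^ 2 with hSdef
  have hΔ : ((ρ₁' - ρ₂') * (ρ₁' - ρ₂')).trace = (S : ℂ) / 2 := by
    have hsub : ρ₁' - ρ₂' = m * (U * (bloch s₁ - bloch s₂) * V)
        - (U * (bloch s₁ - bloch s₂) * V) * m := by
      rw [hd₁, hd₂, hR₁, hR₂]
      ext i j
      simp only [Matrix.mul_apply, Matrix.sub_apply, Fin.sum_univ_two]
      ring
    rw [hsub, conj_comm_trace U V m (bloch s₁ - bloch s₂) hVU hmU hmV, comm_eq n s₁ s₂,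
      Matrix.smul_mul, Matrix.mul_smul, smul_smul, Matrix.trace_smul, trace_dotσ_sq]
    rw [hSdef]
    push_cast
    simp only [smul_eq_mul]
    ring
  have hfin : (lam : ℂ) * (L₁ * ρ₁').trace + ((1 - lam : ℝ) : ℂ) * (L₂ * ρ₂').trace
      - (Lmix * ρmix').trace = ((lam * (1 - lam) * S : ℝ) : ℂ) := by
    rw [hg₁, hg₂, hgmix, hdmixlin]
    push_cast
    simp only [Matrix.trace, Matrix.diag, Matrix.mul_apply, Matrix.sub_apply, Matrix.add_apply,
      Matrix.smul_apply, Fin.sum_univ_two, smul_eq_mul] at hΔ ⊢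
    linear_combination (2 * (lam : ℂ) * (1 - (lam : ℂ))) * hΔ
  have hre := congrArg Complex.re hfin
  simp only [Complex.add_re, Complex.sub_re, Complex.mul_re, Complex.ofReal_re,
    Complex.ofReal_im, zero_mul, sub_zero] at hre
  have hdefect : lam * ((L₁ * ρ₁').trace).re + (1 - lam) * ((L₂ * ρ₂').trace).re
      - ((Lmix * ρmix').trace).re = lam * (1 - lam) * S := by linarith
  refine ⟨hdefect, ?_, ?_⟩
  · intro heq
    have h0 : (lam * (1 - lam)) * S = 0 := by linarith
    have hpos : 0 < lam * (1 - lam) := mul_pos hl0 (by linarith)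
    have hS0 : S = 0 := by
      rcases mul_eq_zero.mp h0 with h | h
      · exact absurd h (ne_of_gt hpos)
      · exact h
    exact (cross_zero_iff n (s₁ - s₂) hn).mp hS0
  · intro hpar
    have hS0 : S = 0 := (cross_zero_iff n (s₁ - s₂) hn).mpr hpar
    rw [hS0] at hdefect
    linarith
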